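/- Let 𝒜 be a unital C*-algebra and (V, V⁺, e) an AOU 𝒜-space. Then the family (C_n^{max}(V;𝒜))_{n∈ℕ} is an operator 𝒜-system structure on V; that is: each C_n^{max}(V;𝒜) is a cone contained in M_n(V)_h with C_n^{max}(V;𝒜) ∩ (−C_n^{max}(V;𝒜)) = {0}, C_1^{max}(V;𝒜) = V⁺, the family is 𝒜-compatible, and for every n the element e_n is an Archimedean order unit for C_n^{max}(V;𝒜). -/

import Mathlib

open Matrix

noncomputable section

/-- An AOU `𝒜`-space: an Archimedean order unit *-vector space `(V, pos, e)` which is an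
`A`-bimodule (actions `l`, `r`) satisfying `(a·x)* = x*·a*`, `a·e = e·a` and
`a*·x·a ∈ V⁺` for `x ∈ V⁺`. -/
structure AOUPack (A V : Type*) [Ring A] [StarRing A] [Algebra ℂ A]
    [AddCommGroup V] [Module ℂ V] [StarAddMonoid V] [StarModule ℂ V] where
  /-- the left action `a · x` -/
  l : A → V → V
  /-- the right action `x · a` -/
  r : V → A → V
  /-- the cone `V⁺` of positive elements -/
  pos : Set V
  /-- the Archimedean order unit -/
  e : V
  l_add : ∀ a b x, l (a + b) x = l a x + l b x
  add_l : ∀ a x y, l a (x + y) = l a x + l a y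
  smul_l : ∀ (c : ℂ) a x, l (c • a) x = c • l a x
  l_smul : ∀ (c : ℂ) a x, l a (c • x) = c • l a x
  r_add : ∀ x y a, r (x + y) a = r x a + r y a
  add_r : ∀ x a b, r x (a + b) = r x a + r x b
  smul_r : ∀ (c : ℂ) x a, r (c • x) a = c • r x a
  r_smul : ∀ (c : ℂ) x a, r x (c • a) = c • r x a
  mul_l : ∀ a b x, l (a * b) x = l a (l b x)
  mul_r : ∀ x a b, r x (a * b) = r (r x a) b
  l_r_assoc : ∀ a x b, r (l a x) b = l a (r x b)
  one_l : ∀ x, l 1 x = x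
  star_l : ∀ a x, star (l a x) = r (star x) (star a)
  pos_isSelfAdjoint : ∀ x ∈ pos, star x = x
  pos_add_mem : ∀ x ∈ pos, ∀ y ∈ pos, x + y ∈ pos
  pos_smul_mem : ∀ (t : ℝ), 0 ≤ t → ∀ x ∈ pos, (t : ℂ) • x ∈ pos
  pos_nonempty : pos.Nonempty
  pos_salient : ∀ x ∈ pos, -x ∈ pos → x = 0
  e_isSelfAdjoint : star e = e
  e_orderUnit : ∀ x, star x = x → ∃ t : ℝ, 0 < t ∧ (t : ℂ) • e - x ∈ pos
  e_arch : ∀ x, (∀ t : ℝ, 0 < t → x + (t : ℂ) • e ∈ pos) → x ∈ pos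
  e_comm : ∀ a, l a e = r e a
  conj_mem : ∀ a, ∀ x ∈ pos, r (l (star a) x) a ∈ pos

namespace AOUPack

variable {A V : Type*} [Ring A] [StarRing A] [Algebra ℂ A]
  [AddCommGroup V] [Module ℂ V] [StarAddMonoid V] [StarModule ℂ V]

variable (P : AOUPack A V)

/-- The action of a matrix over `A` on a matrix over `V` from the left:
`(M · X)_{ij} = Σ_p M_{ip} · X_{pj}`. -/
def amul {k m n : ℕ} (M : Matrix (Fin k) (Fin m) A) (X : Matrix (Fin m) (Fin n) V) :
    Matrix (Fin k) (Fin n) V :=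
  Matrix.of fun i j => ∑ p, P.l (M i p) (X p j)

/-- The action of a matrix over `A` on a matrix over `V` from the right:
`(X · N)_{ij} = Σ_p X_{ip} · N_{pj}`. -/
def vmul {m n l : ℕ} (X : Matrix (Fin m) (Fin n) V) (N : Matrix (Fin n) (Fin l) A) :
    Matrix (Fin m) (Fin l) V :=
  Matrix.of fun i j => ∑ p, P.r (X i p) (N p j)

/-- The congruence `M* · X · M` of `X ∈ M_m(V)` by `M ∈ M_{m,n}(A)`. -/
def conj {m n : ℕ} (M : Matrix (Fin m) (Fin n) A) (X : Matrix (Fin m) (Fin m) V) :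
    Matrix (Fin n) (Fin n) V :=
  P.vmul (P.amul Mᴴ X) M

/-- The diagonal matrix `e_n ∈ M_n(V)` with all diagonal entries equal to `e`. -/
def matE (n : ℕ) : Matrix (Fin n) (Fin n) V := Matrix.diagonal fun _ => P.e

/-- `C_n^{min}(V; A)`: hermitian `X ∈ M_n(V)` with `C* · X · C ∈ V⁺` for every
column `C ∈ M_{n,1}(A)`. -/
def Cmin (n : ℕ) : Set (Matrix (Fin n) (Fin n) V) :=
  {X | Xᴴ = X ∧ ∀ C : Matrix (Fin n) (Fin 1) A, P.conj C X 0 0 ∈ P.pos}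

/-- `D_n^{max}(V; A)`: finite sums `Σ_i A_i* · x_i · A_i` with `x_i ∈ V⁺` and
`A_i ∈ M_{1,n}(A)`. -/
def Dmax (n : ℕ) : Set (Matrix (Fin n) (Fin n) V) :=
  {X | ∃ (k : ℕ) (x : Fin k → V) (a : Fin k → Matrix (Fin 1) (Fin n) A),
    (∀ i, x i ∈ P.pos) ∧ X = ∑ i, P.conj (a i) (Matrix.of fun _ _ => x i)}

/-- `C_n^{max}(V; A) = {X : X + r e_n ∈ D_n^{max}(V; A) for all r > 0}`. -/
def Cmax (n : ℕ) : Set (Matrix (Fin n) (Fin n) V) :=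
  {X | ∀ t : ℝ, 0 < t → X + (t : ℂ) • P.matE n ∈ P.Dmax n}

/-- `Q` is an operator `A`-system structure on `V`: an `A`-compatible matrix ordering
with `Q 1 = V⁺` such that `e_n` is an Archimedean order unit for `Q n` for every `n`. -/
structure IsOperatorSystemStructure (Q : ∀ n : ℕ, Set (Matrix (Fin n) (Fin n) V)) : Prop where
  herm : ∀ n, ∀ X ∈ Q n, Xᴴ = X
  add_mem : ∀ n, ∀ X ∈ Q n, ∀ Y ∈ Q n, X + Y ∈ Q n
  smul_mem : ∀ n (t : ℝ), 0 ≤ t → ∀ X ∈ Q n, (t : ℂ) • X ∈ Q n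
  nonempty : ∀ n, (Q n).Nonempty
  salient : ∀ n, ∀ X ∈ Q n, -X ∈ Q n → X = 0
  compat : ∀ m n (X : Matrix (Fin m) (Fin m) V) (M : Matrix (Fin m) (Fin n) A),
    X ∈ Q m → P.conj M X ∈ Q n
  level_one : ∀ X : Matrix (Fin 1) (Fin 1) V, X ∈ Q 1 ↔ X 0 0 ∈ P.pos
  orderUnit : ∀ n (X : Matrix (Fin n) (Fin n) V), Xᴴ = X →
    ∃ t : ℝ, 0 < t ∧ (t : ℂ) • P.matE n - X ∈ Q n
  arch : ∀ n (X : Matrix (Fin n) (Fin n) V),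
    (∀ t : ℝ, 0 < t → X + (t : ℂ) • P.matE n ∈ Q n) → X ∈ Q n

end AOUPack

namespace AOUPack

variable {A V : Type*} [Ring A] [StarRing A] [Algebra ℂ A]
  [AddCommGroup V] [Module ℂ V] [StarAddMonoid V] [StarModule ℂ V]

variable (P : AOUPack A V)

/-- `P.l a` as an additive monoid hom. -/
def lh (a : A) : V →+ V := AddMonoidHom.mk' (P.l a) (P.add_l a)

/-- `fun x => P.r x a` as an additive monoid hom. -/
def rh (a : A) : V →+ V := AddMonoidHom.mk' (fun x => P.r x a) (fun x y => P.r_add x y a)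

/-- `fun a => P.l a x` as an additive monoid hom. -/
def lh' (x : V) : A →+ V := AddMonoidHom.mk' (fun a => P.l a x) (fun a b => P.l_add a b x)

/-- `P.r x` as an additive monoid hom. -/
def rh' (x : V) : A →+ V := AddMonoidHom.mk' (P.r x) (P.add_r x)

lemma l_zero (a : A) : P.l a 0 = 0 := (P.lh a).map_zero
lemma zero_l (x : V) : P.l 0 x = 0 := (P.lh' x).map_zero
lemma r_zero (x : V) : P.r x 0 = 0 := (P.rh' x).map_zero
lemma zero_r (a : A) : P.r 0 a = 0 := (P.rh a).map_zero

lemma r_one (x : V) : P.r x 1 = x := by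
  have := P.star_l 1 (star x)
  rw [P.one_l, star_one] at this
  simpa using this.symm

lemma star_r (x : V) (a : A) : star (P.r x a) = P.l (star a) (star x) := by
  have := P.star_l (star a) (star x)
  rw [star_star, star_star] at this
  rw [← this, star_star]

lemma smul_l' (c : ℂ) (a : A) (x : V) : P.l (c • a) x = c • P.l a x := P.smul_l c a x

lemma conj_apply {m n : ℕ} (M : Matrix (Fin m) (Fin n) A) (X : Matrix (Fin m) (Fin m) V)
    (i j : Fin n) :
    P.conj M X i j = ∑ p, ∑ q, P.r (P.l (star (M q i)) (X q p)) (M p j) := by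
  simp only [conj, vmul, amul, Matrix.of_apply, Matrix.conjTranspose_apply]
  refine Finset.sum_congr rfl fun p _ => ?_
  exact map_sum (P.rh (M p j)) _ _

lemma amul_amul {k m n n' : ℕ} (M : Matrix (Fin k) (Fin m) A) (N : Matrix (Fin m) (Fin n) A)
    (X : Matrix (Fin n) (Fin n') V) :
    P.amul (M * N) X = P.amul M (P.amul N X) := by
  ext i j
  simp only [amul, Matrix.of_apply, Matrix.mul_apply]
  calc ∑ p, P.l (∑ q, M i q * N q p) (X p j)
      = ∑ p, ∑ q, P.l (M i q) (P.l (N q p) (X p j)) := by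
        refine Finset.sum_congr rfl fun p _ => ?_
        exact (map_sum (P.lh' (X p j)) _ _).trans
          (Finset.sum_congr rfl fun q _ => P.mul_l _ _ _)
    _ = ∑ q, ∑ p, P.l (M i q) (P.l (N q p) (X p j)) := Finset.sum_comm
    _ = ∑ q, P.l (M i q) (∑ p, P.l (N q p) (X p j)) := by
        refine Finset.sum_congr rfl fun q _ => ?_
        exact (map_sum (P.lh (M i q)) _ _).symm

lemma vmul_vmul {m n k k' : ℕ} (X : Matrix (Fin m) (Fin n) V) (M : Matrix (Fin n) (Fin k) A)
    (N : Matrix (Fin k) (Fin k') A) :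
    P.vmul X (M * N) = P.vmul (P.vmul X M) N := by
  ext i j
  simp only [vmul, Matrix.of_apply, Matrix.mul_apply]
  calc ∑ p, P.r (X i p) (∑ q, M p q * N q j)
      = ∑ p, ∑ q, P.r (P.r (X i p) (M p q)) (N q j) := by
        refine Finset.sum_congr rfl fun p _ => ?_
        exact (map_sum (P.rh' (X i p)) _ _).trans
          (Finset.sum_congr rfl fun q _ => P.mul_r _ _ _)
    _ = ∑ q, ∑ p, P.r (P.r (X i p) (M p q)) (N q j) := Finset.sum_comm
    _ = ∑ q, P.r (∑ p, P.r (X i p) (M p q)) (N q j) := by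
        refine Finset.sum_congr rfl fun q _ => ?_
        exact (map_sum (P.rh (N q j)) _ _).symm

lemma vmul_amul {k m n n' : ℕ} (M : Matrix (Fin k) (Fin m) A) (X : Matrix (Fin m) (Fin n) V)
    (N : Matrix (Fin n) (Fin n') A) :
    P.vmul (P.amul M X) N = P.amul M (P.vmul X N) := by
  ext i j
  simp only [vmul, amul, Matrix.of_apply]
  calc ∑ p, P.r (∑ q, P.l (M i q) (X q p)) (N p j)
      = ∑ p, ∑ q, P.l (M i q) (P.r (X q p) (N p j)) := by
        refine Finset.sum_congr rfl fun p _ => ?_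
        exact (map_sum (P.rh (N p j)) _ _).trans
          (Finset.sum_congr rfl fun q _ => P.l_r_assoc _ _ _)
    _ = ∑ q, ∑ p, P.l (M i q) (P.r (X q p) (N p j)) := Finset.sum_comm
    _ = ∑ q, P.l (M i q) (∑ p, P.r (X q p) (N p j)) := by
        refine Finset.sum_congr rfl fun q _ => ?_
        exact (map_sum (P.lh (M i q)) _ _).symm

lemma conj_conj {m n k : ℕ} (M : Matrix (Fin m) (Fin n) A) (N : Matrix (Fin n) (Fin k) A)
    (X : Matrix (Fin m) (Fin m) V) :
    P.conj N (P.conj M X) = P.conj (M * N) X := by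
  unfold conj
  rw [Matrix.conjTranspose_mul, amul_amul, vmul_vmul]; simp only [← vmul_amul]

lemma amul_add {k m n : ℕ} (M : Matrix (Fin k) (Fin m) A) (X Y : Matrix (Fin m) (Fin n) V) :
    P.amul M (X + Y) = P.amul M X + P.amul M Y := by
  ext i j
  simp only [amul, Matrix.of_apply, Matrix.add_apply, P.add_l, Finset.sum_add_distrib]

lemma vmul_add {m n k : ℕ} (X Y : Matrix (Fin m) (Fin n) V) (N : Matrix (Fin n) (Fin k) A) :
    P.vmul (X + Y) N = P.vmul X N + P.vmul Y N := by
  ext i j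
  simp only [vmul, Matrix.of_apply, Matrix.add_apply, P.r_add, Finset.sum_add_distrib]

lemma conj_add {m n : ℕ} (M : Matrix (Fin m) (Fin n) A) (X Y : Matrix (Fin m) (Fin m) V) :
    P.conj M (X + Y) = P.conj M X + P.conj M Y := by
  unfold conj; rw [amul_add, vmul_add]

lemma amul_smul {k m n : ℕ} (c : ℂ) (M : Matrix (Fin k) (Fin m) A)
    (X : Matrix (Fin m) (Fin n) V) :
    P.amul M (c • X) = c • P.amul M X := by
  ext i j
  simp only [amul, Matrix.of_apply, Matrix.smul_apply, P.l_smul, Finset.smul_sum]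

lemma vmul_smul {m n k : ℕ} (c : ℂ) (X : Matrix (Fin m) (Fin n) V)
    (N : Matrix (Fin n) (Fin k) A) :
    P.vmul (c • X) N = c • P.vmul X N := by
  ext i j
  simp only [vmul, Matrix.of_apply, Matrix.smul_apply, P.smul_r, Finset.smul_sum]

lemma conj_smul {m n : ℕ} (c : ℂ) (M : Matrix (Fin m) (Fin n) A)
    (X : Matrix (Fin m) (Fin m) V) :
    P.conj M (c • X) = c • P.conj M X := by
  unfold conj; rw [amul_smul, vmul_smul]

/-- `P.conj M` as an additive monoid hom. -/
def conjHom {m n : ℕ} (M : Matrix (Fin m) (Fin n) A) :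
    Matrix (Fin m) (Fin m) V →+ Matrix (Fin n) (Fin n) V :=
  AddMonoidHom.mk' (P.conj M) (P.conj_add M)

/-! ### cone basics -/

lemma zero_mem_pos : (0 : V) ∈ P.pos := by
  obtain ⟨x, hx⟩ := P.pos_nonempty
  simpa using P.pos_smul_mem 0 le_rfl x hx

lemma sum_mem_pos {ι : Type*} (s : Finset ι) (f : ι → V) (hf : ∀ i ∈ s, f i ∈ P.pos) :
    ∑ i ∈ s, f i ∈ P.pos := by
  classical
  induction s using Finset.induction_on with
  | empty => simpa using P.zero_mem_pos
  | insert _ _ h ih =>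
      rw [Finset.sum_insert h]
      exact P.pos_add_mem _ (hf _ (Finset.mem_insert_self _ _))
        _ (ih fun i hi => hf i (Finset.mem_insert_of_mem hi))

lemma e_mem_pos : P.e ∈ P.pos := by
  obtain ⟨x, hx⟩ := P.pos_nonempty
  obtain ⟨t, ht, hte⟩ := P.e_orderUnit x (P.pos_isSelfAdjoint x hx)
  have h1 : (t : ℂ) • P.e ∈ P.pos := by
    have := P.pos_add_mem _ hx _ hte
    simpa using this
  have h2 := P.pos_smul_mem t⁻¹ (by positivity) _ h1
  rw [smul_smul] at h2
  rw [show ((t⁻¹ : ℝ) : ℂ) * (t : ℂ) = 1 by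
    rw [← Complex.ofReal_mul, inv_mul_cancel₀ ht.ne', Complex.ofReal_one]] at h2
  simpa using h2

lemma pos_pad {x : V} (hx : x ∈ P.pos) {u : ℝ} (hu : 0 ≤ u) : x + (u : ℂ) • P.e ∈ P.pos :=
  P.pos_add_mem _ hx _ (P.pos_smul_mem u hu _ P.e_mem_pos)

/-! ### `Psi` and `matE` -/

/-- Entrywise application of `r e` to a matrix over `A`. -/
def Psi {m n : ℕ} (B : Matrix (Fin m) (Fin n) A) : Matrix (Fin m) (Fin n) V :=
  Matrix.of fun i j => P.r P.e (B i j)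

lemma Psi_add {m n : ℕ} (B C : Matrix (Fin m) (Fin n) A) :
    P.Psi (B + C) = P.Psi B + P.Psi C := by
  ext i j; simp [Psi, P.add_r]

lemma Psi_smul {m n : ℕ} (c : ℂ) (B : Matrix (Fin m) (Fin n) A) :
    P.Psi (c • B) = c • P.Psi B := by
  ext i j; simp [Psi, P.r_smul]

lemma Psi_one {n : ℕ} : P.Psi (1 : Matrix (Fin n) (Fin n) A) = P.matE n := by
  ext i j
  rcases eq_or_ne i j with h | h
  · subst h; simp [Psi, matE, P.r_one]
  · simp [Psi, matE, Matrix.one_apply_ne h, Matrix.diagonal_apply_ne _ h, P.r_zero]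

lemma matE_herm (n : ℕ) : (P.matE n)ᴴ = P.matE n := by
  simp [matE, Matrix.diagonal_conjTranspose, P.e_isSelfAdjoint]

lemma conj_matE {m n : ℕ} (M : Matrix (Fin m) (Fin n) A) :
    P.conj M (P.matE m) = P.Psi (Mᴴ * M) := by
  ext i j
  rw [P.conj_apply]
  simp only [Psi, Matrix.of_apply, Matrix.mul_apply, Matrix.conjTranspose_apply]
  refine (Finset.sum_congr rfl fun p _ => ?_).trans (map_sum (P.rh' P.e) _ _).symm
  calc ∑ q, P.r (P.l (star (M q i)) (P.matE m q p)) (M p j)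
      = P.r (P.l (star (M p i)) P.e) (M p j) := by
        rw [Finset.sum_eq_single p]
        · simp [matE, Matrix.diagonal_apply_eq]
        · intro q _ hq
          simp [matE, Matrix.diagonal_apply_ne _ hq, P.l_zero, P.zero_r]
        · simp
    _ = P.r P.e (star (M p i) * M p j) := by
        rw [P.e_comm, ← P.mul_r]

/-! ### `Dmax` basics -/

lemma dmax_zero (n : ℕ) : (0 : Matrix (Fin n) (Fin n) V) ∈ P.Dmax n :=
  ⟨0, ![], ![], by simp, by simp⟩

lemma dmax_add {n : ℕ} {X Y : Matrix (Fin n) (Fin n) V}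
    (hX : X ∈ P.Dmax n) (hY : Y ∈ P.Dmax n) : X + Y ∈ P.Dmax n := by
  obtain ⟨k₁, x₁, a₁, hx₁, rfl⟩ := hX
  obtain ⟨k₂, x₂, a₂, hx₂, rfl⟩ := hY
  refine ⟨k₁ + k₂, Fin.append x₁ x₂, Fin.append a₁ a₂, ?_, ?_⟩
  · intro i
    rcases lt_or_ge (i : ℕ) k₁ with h | h
    · have : i = Fin.castAdd k₂ ⟨i, h⟩ := by simp [Fin.ext_iff]
      rw [this, Fin.append_left]; exact hx₁ _
    · have : i = Fin.natAdd k₁ ⟨i - k₁, by omega⟩ := by simp [Fin.ext_iff]; omega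
      rw [this, Fin.append_right]; exact hx₂ _
  · rw [Fin.sum_univ_add]
    congr 1
    · exact Finset.sum_congr rfl fun i _ => by simp [Fin.append_left]
    · exact Finset.sum_congr rfl fun i _ => by simp [Fin.append_right]

lemma dmax_sum {n : ℕ} {ι : Type*} (s : Finset ι) (f : ι → Matrix (Fin n) (Fin n) V)
    (hf : ∀ i ∈ s, f i ∈ P.Dmax n) : ∑ i ∈ s, f i ∈ P.Dmax n := by
  classical
  induction s using Finset.induction_on with
  | empty => simpa using P.dmax_zero n
  | insert _ _ h ih =>
      rw [Finset.sum_insert h]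
      exact P.dmax_add (hf _ (Finset.mem_insert_self _ _))
        (ih fun i hi => hf i (Finset.mem_insert_of_mem hi))

lemma dmax_smul {n : ℕ} {X : Matrix (Fin n) (Fin n) V} (t : ℝ) (ht : 0 ≤ t)
    (hX : X ∈ P.Dmax n) : (t : ℂ) • X ∈ P.Dmax n := by
  obtain ⟨k, x, a, hx, rfl⟩ := hX
  refine ⟨k, fun i => (t : ℂ) • x i, a, fun i => P.pos_smul_mem t ht _ (hx i), ?_⟩
  rw [Finset.smul_sum]
  refine Finset.sum_congr rfl fun i _ => ?_
  rw [← P.conj_smul]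
  rfl

lemma dmax_conj {m n : ℕ} {X : Matrix (Fin m) (Fin m) V} (M : Matrix (Fin m) (Fin n) A)
    (hX : X ∈ P.Dmax m) : P.conj M X ∈ P.Dmax n := by
  obtain ⟨k, x, a, hx, rfl⟩ := hX
  refine ⟨k, x, fun i => a i * M, hx, ?_⟩
  exact (map_sum (P.conjHom M) _ _).trans
    (Finset.sum_congr rfl fun i _ => (P.conj_conj (a i) M _))

lemma dmax_herm {n : ℕ} {X : Matrix (Fin n) (Fin n) V} (hX : X ∈ P.Dmax n) : Xᴴ = X := by
  obtain ⟨k, x, a, hx, rfl⟩ := hX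
  rw [Matrix.conjTranspose_sum]
  refine Finset.sum_congr rfl fun i _ => ?_
  ext p q
  rw [Matrix.conjTranspose_apply, P.conj_apply, P.conj_apply]
  simp only [Fin.sum_univ_one, Matrix.of_apply]
  rw [P.star_r, P.star_l, star_star, P.pos_isSelfAdjoint _ (hx i), P.l_r_assoc]

lemma psi_mem {k n : ℕ} (N : Matrix (Fin k) (Fin n) A) : P.Psi (Nᴴ * N) ∈ P.Dmax n := by
  refine ⟨k, fun _ => P.e, fun p => Matrix.of fun _ j => N p j, fun _ => P.e_mem_pos, ?_⟩
  ext i j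
  simp only [Psi, Matrix.of_apply, Matrix.mul_apply, Matrix.conjTranspose_apply,
    Matrix.sum_apply]
  refine (map_sum (P.rh' P.e) _ _).trans (Finset.sum_congr rfl fun p _ => ?_)
  rw [P.conj_apply]
  simp only [Fin.sum_univ_one, Matrix.of_apply]
  show P.r P.e (star (N p i) * N p j) = _
  rw [P.mul_r, ← P.e_comm]

lemma matE_mem (n : ℕ) : P.matE n ∈ P.Dmax n := by
  have := P.psi_mem (1 : Matrix (Fin n) (Fin n) A)
  rwa [Matrix.conjTranspose_one, one_mul, Psi_one] at this

lemma dmax_subset_cmax {n : ℕ} {X : Matrix (Fin n) (Fin n) V} (hX : X ∈ P.Dmax n) :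
    X ∈ P.Cmax n :=
  fun t ht => P.dmax_add hX (P.dmax_smul t ht.le (P.matE_mem n))

lemma dmax_entry_pos {X : Matrix (Fin 1) (Fin 1) V} (hX : X ∈ P.Dmax 1) :
    X 0 0 ∈ P.pos := by
  obtain ⟨k, x, a, hx, rfl⟩ := hX
  rw [Matrix.sum_apply]
  refine P.sum_mem_pos _ _ fun i _ => ?_
  rw [P.conj_apply]
  simp only [Fin.sum_univ_one, Matrix.of_apply]
  exact P.conj_mem _ _ (hx i)

lemma cmax_col_pos {n : ℕ} {X : Matrix (Fin n) (Fin n) V} (hX : X ∈ P.Cmax n)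
    (C : Matrix (Fin n) (Fin 1) A) : P.conj C X 0 0 ∈ P.pos := by
  set y := P.conj C (P.matE n) 0 0 with hy
  have hypos : y ∈ P.pos := P.dmax_entry_pos (P.dmax_conj C (P.matE_mem n))
  obtain ⟨u, hu, huy⟩ := P.e_orderUnit y (P.pos_isSelfAdjoint _ hypos)
  apply P.e_arch
  intro t ht
  have h1 : P.conj C (X + ((t/u : ℝ) : ℂ) • P.matE n) ∈ P.Dmax 1 :=
    P.dmax_conj C (hX _ (by positivity))
  have h2 := P.dmax_entry_pos h1
  rw [P.conj_add, P.conj_smul] at h2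
  have h3 : P.conj C X 0 0 + ((t/u : ℝ) : ℂ) • y ∈ P.pos := by
    simpa [Matrix.add_apply, Matrix.smul_apply, hy] using h2
  have h4 := P.pos_smul_mem (t/u) (by positivity) _ huy
  have h5 := P.pos_add_mem _ h3 _ h4
  have hc : ((t/u : ℝ) : ℂ) * (u : ℂ) = (t : ℂ) := by
    rw [← Complex.ofReal_mul, div_mul_cancel₀ _ hu.ne']
  rw [smul_sub, smul_smul, hc] at h5
  convert h5 using 1
  abel

end AOUPack

section WithStarModule

open AOUPack

variable {A V : Type*} [Ring A] [StarRing A] [Algebra ℂ A] [StarModule ℂ A]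
  [AddCommGroup V] [Module ℂ V] [StarAddMonoid V] [StarModule ℂ V]

variable (P : AOUPack A V)

lemma starAlgMapC (c : ℂ) :
    star (algebraMap ℂ A c) = algebraMap ℂ A (star c) := by
  rw [Algebra.algebraMap_eq_smul_one, Algebra.algebraMap_eq_smul_one, star_smul, star_one]

lemma AOUPack.r_l_scalar (c d : ℂ) (x : V) :
    P.r (P.l (algebraMap ℂ A c) x) (algebraMap ℂ A d) = (c * d) • x := by
  rw [Algebra.algebraMap_eq_smul_one, Algebra.algebraMap_eq_smul_one,
    P.smul_l, P.one_l, P.r_smul, P.smul_r, P.r_one, smul_smul, mul_comm]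

lemma AOUPack.scalar_conj {n : ℕ} (g : Fin n → ℂ) {x : V} (hx : x ∈ P.pos) :
    (Matrix.of fun p q => (star (g p) * g q) • x) ∈ P.Dmax n := by
  refine ⟨1, fun _ => x, fun _ => Matrix.of fun _ p => algebraMap ℂ A (g p),
    fun _ => hx, ?_⟩
  ext p q
  rw [Fin.sum_univ_one, P.conj_apply]
  simp only [Fin.sum_univ_one, Matrix.of_apply]
  rw [starAlgMapC, P.r_l_scalar]

lemma AOUPack.diag_mem {n : ℕ} (w : Fin n → V) (hw : ∀ p, w p ∈ P.pos) :
    (Matrix.of fun p q => if p = q then w p else 0) ∈ P.Dmax n := by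
  have key : (Matrix.of fun p q => if p = q then w p else 0 : Matrix (Fin n) (Fin n) V) =
      ∑ s : Fin n, Matrix.of fun p q =>
        (star (if p = s then (1:ℂ) else 0) * (if q = s then (1:ℂ) else 0)) • w s := by
    ext p q
    simp only [Matrix.sum_apply, Matrix.of_apply, apply_ite (star : ℂ → ℂ), star_one, star_zero, ite_mul,
      one_mul, zero_mul, mul_ite, mul_one, mul_zero, ite_smul, one_smul, zero_smul]
    rcases eq_or_ne p q with rfl | hpq
    · simp
    · rw [Finset.sum_eq_zero]
      · simp [hpq]
      · intro s _
        rcases eq_or_ne p s with rfl | hps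
        · simp [Ne.symm hpq]
        · simp [hps]
  rw [key]
  exact P.dmax_sum _ _ fun s _ => P.scalar_conj _ (hw s)

lemma AOUPack.conj_scalar_col {n : ℕ} (g : Fin n → ℂ) (X : Matrix (Fin n) (Fin n) V) :
    P.conj (Matrix.of fun p (_ : Fin 1) => algebraMap ℂ A (g p)) X 0 0
      = ∑ p, ∑ q, (star (g q) * g p) • X q p := by
  rw [P.conj_apply]
  refine Finset.sum_congr rfl fun p _ => Finset.sum_congr rfl fun q _ => ?_
  simp only [Matrix.of_apply]
  rw [starAlgMapC, P.r_l_scalar]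

lemma AOUPack.cmax_salient {n : ℕ} {X : Matrix (Fin n) (Fin n) V} (hX : X ∈ P.Cmax n)
    (hX' : -X ∈ P.Cmax n) : X = 0 := by
  have key : ∀ g : Fin n → ℂ, ∑ p, ∑ q, (star (g q) * g p) • X q p = 0 := by
    intro g
    set C := (Matrix.of fun p (_ : Fin 1) => algebraMap ℂ A (g p)) with hC
    have h1 := P.cmax_col_pos hX C
    have h2 := P.cmax_col_pos hX' C
    have hneg : P.conj C (-X) = -(P.conj C X) := by
      have := P.conj_smul (-1) C X
      simpa using this
    have h2' : -(P.conj C X 0 0) ∈ P.pos := by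
      rw [hneg] at h2
      simpa using h2
    have h0 := P.pos_salient _ h1 h2'
    rw [hC, P.conj_scalar_col] at h0
    exact h0
  have diag : ∀ i, X i i = 0 := by
    intro i
    have := key (fun p => if p = i then 1 else 0)
    simpa [apply_ite (star : ℂ → ℂ), ite_mul, mul_ite, ite_smul, Finset.sum_ite_eq',
      Finset.sum_ite_eq] using this
  have offdiag : ∀ c : ℂ, ∀ i j, i ≠ j →
      c • X i j + (star c) • X j i = 0 := by
    intro c i j hij
    have := key (fun p => (if p = i then 1 else 0) + (if p = j then c else 0))
    simp only [star_add, apply_ite (star : ℂ → ℂ), star_one, star_zero, add_mul, mul_add,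
      ite_mul, mul_ite, one_mul, mul_one, zero_mul, mul_zero, add_smul, ite_smul, zero_smul,
      one_smul, ite_add_zero, Finset.sum_add_distrib, Finset.sum_ite_irrel,
      Finset.sum_const_zero, Finset.sum_ite_eq', Finset.sum_ite_eq, Finset.mem_univ,
      if_true] at this
    rw [diag i, diag j] at this
    simp only [smul_zero, if_neg hij, if_neg (Ne.symm hij)] at this
    rw [zero_add, add_zero] at this
    rw [add_comm] at this
    exact this
  ext i j
  rcases eq_or_ne i j with rfl | hij
  · simp [diag i]
  · have e1 := offdiag 1 i j hij
    have e2 := offdiag Complex.I i j hij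
    simp only [one_smul, star_one] at e1
    rw [Complex.star_def, Complex.conj_I] at e2
    have e3 : Complex.I • (X i j - X j i) = 0 := by
      rw [smul_sub]
      rw [neg_smul] at e2
      rwa [sub_eq_add_neg]
    have e4 : X i j - X j i = 0 := by
      rcases smul_eq_zero.mp e3 with h | h
      · exact absurd h Complex.I_ne_zero
      · exact h
    have e5 : (2 : ℂ) • X i j = 0 := by
      rw [two_smul]
      nth_rewrite 2 [show X i j = X j i from sub_eq_zero.mp e4]
      exact e1
    simp only [Matrix.zero_apply]
    rcases smul_eq_zero.mp e5 with h | h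
    · norm_num at h
    · exact h

end WithStarModule

section CStar

open AOUPack

variable {A V : Type*} [CStarAlgebra A]
  [AddCommGroup V] [Module ℂ V] [StarAddMonoid V] [StarModule ℂ V]

variable (P : AOUPack A V)

lemma AOUPack.Psi_sum {m' n : ℕ} {ι : Type*} (s : Finset ι)
    (f : ι → Matrix (Fin m') (Fin n) A) :
    P.Psi (∑ p ∈ s, f p) = ∑ p ∈ s, P.Psi (f p) :=
  map_sum (AddMonoidHom.mk' P.Psi (P.Psi_add)) _ _

lemma AOUPack.row_decomp {n : ℕ} (R : Matrix (Fin 1) (Fin n) A) :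
    ∃ t : ℝ, 0 < t ∧ P.Psi ((t : ℂ) • 1 - Rᴴ * R) ∈ P.Dmax n := by
  classical
  letI := CStarAlgebra.spectralOrder A
  haveI := CStarAlgebra.spectralOrderedRing A
  set c : A := (R * Rᴴ) 0 0 with hc
  have hcsa : IsSelfAdjoint c := by
    show star c = c
    rw [hc]
    simp [Matrix.mul_apply, star_sum, StarMul.star_mul]
  set t : ℝ := ‖c‖ + 1 with hT
  have ht : 0 < t := by positivity
  have h2 : (0 : A) ≤ (t : ℂ) • 1 - c := by
    rw [sub_nonneg, Complex.coe_smul, ← Algebra.algebraMap_eq_smul_one]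
    calc c ≤ algebraMap ℝ A ‖c‖ := hcsa.le_algebraMap_norm_self
      _ ≤ algebraMap ℝ A (‖c‖ + 1) := by
          rw [map_add]
          refine le_add_of_nonneg_right ?_
          rw [_root_.map_one]
          simpa using star_mul_self_nonneg (1 : A)
  set d : A := CFC.sqrt ((t : ℂ) • 1 - c) with hd
  have hdd : star d * d = (t : ℂ) • 1 - c := by
    have hs : (0 : A) ≤ d := CFC.sqrt_nonneg _
    rw [hd, (IsSelfAdjoint.of_nonneg hs).star_eq]
    exact CFC.sqrt_mul_sqrt_self _ h2
  set G : Matrix (Fin n) (Fin n) A := (t : ℂ) • 1 - Rᴴ * R with hG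
  set D : Matrix (Fin 1) (Fin 1) A := Matrix.of fun _ _ => d with hD
  set N : Matrix (Fin 1) (Fin n) A := D * R with hN
  have hGsa : Gᴴ = G := by
    rw [hG]
    rw [Matrix.conjTranspose_sub, Matrix.conjTranspose_smul, Matrix.conjTranspose_one,
      Matrix.conjTranspose_mul, Matrix.conjTranspose_conjTranspose]
    norm_num
  have h11 : R * Rᴴ + Dᴴ * D = (t : ℂ) • (1 : Matrix (Fin 1) (Fin 1) A) := by
    ext i j
    have hi : i = 0 := Subsingleton.elim _ _
    have hj : j = 0 := Subsingleton.elim _ _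
    subst hi; subst hj
    have hDD' : (Dᴴ * D) 0 0 = star d * d := by
      simp [hD, Matrix.mul_apply, Matrix.conjTranspose_apply]
    rw [Matrix.add_apply, hDD', hdd, ← hc, Matrix.smul_apply, Matrix.one_apply_eq]
    abel
  have hkey : (t : ℂ) • G = Gᴴ * G + Nᴴ * N := by
    have hb : Rᴴ * R * (Rᴴ * R) = Rᴴ * (R * Rᴴ) * R := by
      rw [Matrix.mul_assoc, Matrix.mul_assoc, Matrix.mul_assoc]
    have hn : Nᴴ * N = Rᴴ * (Dᴴ * D) * R := by
      rw [hN, Matrix.conjTranspose_mul, Matrix.mul_assoc, Matrix.mul_assoc, Matrix.mul_assoc]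
    have hsplit : Rᴴ * (Dᴴ * D) * R = (t : ℂ) • (Rᴴ * R) - Rᴴ * (R * Rᴴ) * R := by
      have h12 : Dᴴ * D = (t : ℂ) • (1 : Matrix (Fin 1) (Fin 1) A) - R * Rᴴ := by
        rw [← h11]; abel
      rw [h12, Matrix.mul_sub, Matrix.sub_mul, Matrix.mul_smul, Matrix.mul_one,
        Matrix.smul_mul]
    rw [hGsa, hG, hn]
    rw [Matrix.sub_mul, Matrix.mul_sub, Matrix.mul_sub, hb, hsplit]
    simp only [Matrix.smul_mul, Matrix.mul_smul, Matrix.one_mul, Matrix.mul_one, smul_sub,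
      smul_smul]
    abel
  refine ⟨t, ht, ?_⟩
  have hsq : 0 < Real.sqrt t := Real.sqrt_pos.mpr ht
  set s1 : ℝ := (Real.sqrt t)⁻¹ with hs1
  have hscale : ∀ (k : ℕ) (B : Matrix (Fin k) (Fin n) A),
      ((s1 : ℂ) • B)ᴴ * ((s1 : ℂ) • B) = ((s1 * s1 : ℝ) : ℂ) • (Bᴴ * B) := by
    intro k B
    rw [Matrix.conjTranspose_smul, Matrix.smul_mul, Matrix.mul_smul, smul_smul]
    congr 1
    rw [Complex.star_def, Complex.conj_ofReal]
    push_cast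
    ring
  have hs1t : (s1 * s1) * t = 1 := by
    rw [hs1]
    rw [← Real.sqrt_mul_self ht.le]
    field_simp
    rw [Real.sq_sqrt (Real.sqrt_nonneg _)]
  have hGdecomp : G = ((s1:ℂ) • G)ᴴ * ((s1:ℂ) • G) + ((s1:ℂ) • N)ᴴ * ((s1:ℂ) • N) := by
    rw [hscale, hscale, ← smul_add, ← hkey, smul_smul,
      show ((s1 * s1 : ℝ) : ℂ) * (t : ℂ) = 1 by
        rw [← Complex.ofReal_mul, hs1t, Complex.ofReal_one],
      one_smul]
  rw [← hG, hGdecomp, P.Psi_add]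
  exact P.dmax_add (P.psi_mem _) (P.psi_mem _)

lemma AOUPack.cmax_conj {m n : ℕ} (M : Matrix (Fin m) (Fin n) A)
    {X : Matrix (Fin m) (Fin m) V} (hX : X ∈ P.Cmax m) : P.conj M X ∈ P.Cmax n := by
  classical
  intro t ht
  set R : Fin m → Matrix (Fin 1) (Fin n) A := fun p => Matrix.of fun _ j => M p j with hR
  choose u hu hmem using fun p => P.row_decomp (R p)
  set T : ℝ := 1 + ∑ p, u p with hTdef
  have hT : 0 < T := by
    have : (0:ℝ) ≤ ∑ p, u p := Finset.sum_nonneg fun p _ => (hu p).le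
    linarith
  set s : ℝ := t / T with hs0
  have hs : 0 < s := div_pos ht hT
  have hMM : Mᴴ * M = ∑ p, (R p)ᴴ * (R p) := by
    ext i j
    simp only [Matrix.mul_apply, Matrix.conjTranspose_apply, Matrix.sum_apply, hR,
      Matrix.of_apply, Fin.sum_univ_one]
  have key : P.conj M X + (t : ℂ) • P.matE n
      = P.conj M (X + (s : ℂ) • P.matE m)
        + (s : ℂ) • (P.Psi (1 : Matrix (Fin n) (Fin n) A)
            + ∑ p, P.Psi ((u p : ℂ) • 1 - (R p)ᴴ * (R p))) := by
    rw [P.conj_add, P.conj_smul, P.conj_matE]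
    have hsum : P.Psi (Mᴴ * M) + (P.Psi (1 : Matrix (Fin n) (Fin n) A)
        + ∑ p, P.Psi ((u p : ℂ) • 1 - (R p)ᴴ * (R p))) = (T : ℂ) • P.matE n := by
      rw [← P.Psi_sum, ← P.Psi_add, ← P.Psi_add]
      have hT1 : (T : ℂ) • (1 : Matrix (Fin n) (Fin n) A)
          = (1 : Matrix (Fin n) (Fin n) A) + ∑ p, (u p : ℂ) • (1 : Matrix (Fin n) (Fin n) A) := by
        rw [← Finset.sum_smul]
        nth_rewrite 2 [← one_smul ℂ (1 : Matrix (Fin n) (Fin n) A)]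
        rw [← add_smul, hTdef]
        congr 1
        push_cast
        rfl
      have harg : Mᴴ * M + ((1 : Matrix (Fin n) (Fin n) A)
          + ∑ p, ((u p : ℂ) • 1 - (R p)ᴴ * (R p))) = (T : ℂ) • 1 := by
        rw [hMM, Finset.sum_sub_distrib, hT1]
        abel
      rw [harg, P.Psi_smul, P.Psi_one]
    calc P.conj M X + (t : ℂ) • P.matE n
        = P.conj M X + (s : ℂ) • ((T : ℂ) • P.matE n) := by
          rw [smul_smul, show ((s:ℝ):ℂ) * ((T:ℝ):ℂ) = ((t:ℝ):ℂ) by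
            rw [← Complex.ofReal_mul, hs0, div_mul_cancel₀ _ hT.ne']]
      _ = P.conj M X + (s : ℂ) • (P.Psi (Mᴴ * M) + (P.Psi 1
            + ∑ p, P.Psi ((u p : ℂ) • 1 - (R p)ᴴ * (R p)))) := by rw [hsum]
      _ = _ := by rw [smul_add]; abel
  rw [key]
  refine P.dmax_add (P.dmax_conj M (hX s hs)) (P.dmax_smul s hs.le (P.dmax_add ?_ ?_))
  · rw [P.Psi_one]; exact P.matE_mem n
  · exact P.dmax_sum _ _ fun p _ => hmem p

end CStar

section OrderUnit

open AOUPack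

variable {A V : Type*} [Ring A] [StarRing A] [Algebra ℂ A] [StarModule ℂ A]
  [AddCommGroup V] [Module ℂ V] [StarAddMonoid V] [StarModule ℂ V]

variable (P : AOUPack A V)

lemma herm_decomp (v : V) : ∃ v₁ v₂ : V, star v₁ = v₁ ∧ star v₂ = v₂ ∧
    v = v₁ + Complex.I • v₂ ∧ star v = v₁ - Complex.I • v₂ := by
  refine ⟨(2:ℂ)⁻¹ • (v + star v), (2:ℂ)⁻¹ • (Complex.I • (star v - v)), ?_, ?_, ?_, ?_⟩
  · rw [star_smul, star_add, star_star]
    rw [show star ((2:ℂ)⁻¹) = (2:ℂ)⁻¹ by simp]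
    rw [add_comm]
  · rw [star_smul, star_smul, star_sub, star_star]
    rw [show star ((2:ℂ)⁻¹) = (2:ℂ)⁻¹ by simp, Complex.star_def, Complex.conj_I]
    match_scalars <;> simp
  · match_scalars <;> simp [Complex.ext_iff] <;> ring
  · match_scalars <;> simp [Complex.ext_iff] <;> ring

lemma AOUPack.claimB {n : ℕ} (v : V) (i j : Fin n) :
    ∃ t : ℝ, 0 < t ∧
      ((t : ℂ) • P.matE n + Matrix.of fun p q =>
        ((if p = i then (1:ℂ) else 0) * (if q = j then (1:ℂ) else 0)) • ((2:ℂ) • v)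
        + ((if p = j then (1:ℂ) else 0) * (if q = i then (1:ℂ) else 0)) • ((2:ℂ) • star v))
        ∈ P.Dmax n := by
  classical
  obtain ⟨v₁, v₂, hv1, hv2, hvv, hsv⟩ := herm_decomp v
  obtain ⟨s₁, hs₁, hm₁⟩ := P.e_orderUnit v₁ hv1
  obtain ⟨s₂, hs₂, hm₂⟩ := P.e_orderUnit (-v₁) (by rw [star_neg, hv1])
  obtain ⟨s₃, hs₃, hm₃⟩ := P.e_orderUnit v₂ hv2
  obtain ⟨s₄, hs₄, hm₄⟩ := P.e_orderUnit (-v₂) (by rw [star_neg, hv2])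
  set s : ℝ := s₁ + s₂ + s₃ + s₄ with hsdef
  have hs : 0 < s := by linarith
  -- the four positive elements
  have hm₂' : (s₂ : ℂ) • P.e + v₁ ∈ P.pos := by rwa [sub_neg_eq_add] at hm₂
  have hm₄' : (s₄ : ℂ) • P.e + v₂ ∈ P.pos := by rwa [sub_neg_eq_add] at hm₄
  have mem1 : (s : ℂ) • P.e + v₁ ∈ P.pos := by
    have h := P.pos_pad hm₂' (show (0:ℝ) ≤ s₁ + s₃ + s₄ by linarith)
    convert h using 1
    rw [hsdef]
    push_cast
    module
  have mem2 : (s : ℂ) • P.e - v₁ ∈ P.pos := by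
    have h := P.pos_pad hm₁ (show (0:ℝ) ≤ s₂ + s₃ + s₄ by linarith)
    convert h using 1
    rw [hsdef]
    push_cast
    module
  have mem3 : (s : ℂ) • P.e - v₂ ∈ P.pos := by
    have h := P.pos_pad hm₃ (show (0:ℝ) ≤ s₁ + s₂ + s₄ by linarith)
    convert h using 1
    rw [hsdef]
    push_cast
    module
  have mem4 : (s : ℂ) • P.e + v₂ ∈ P.pos := by
    have h := P.pos_pad hm₄' (show (0:ℝ) ≤ s₁ + s₂ + s₃ by linarith)
    convert h using 1
    rw [hsdef]
    push_cast
    module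
  set g₁ : Fin n → ℂ := fun p => (if p = i then 1 else 0) + (if p = j then 1 else 0) with hg₁
  set g₂ : Fin n → ℂ := fun p => (if p = i then 1 else 0) + (if p = j then -1 else 0) with hg₂
  set g₃ : Fin n → ℂ := fun p => (if p = i then 1 else 0)
      + (if p = j then -Complex.I else 0) with hg₃
  set g₄ : Fin n → ℂ := fun p => (if p = i then 1 else 0)
      + (if p = j then Complex.I else 0) with hg₄
  refine ⟨8 * s + 1, by linarith, ?_⟩
  have key : (((8 * s + 1 : ℝ) : ℂ) • P.matE n + Matrix.of fun p q =>
        ((if p = i then (1:ℂ) else 0) * (if q = j then (1:ℂ) else 0)) • ((2:ℂ) • v)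
        + ((if p = j then (1:ℂ) else 0) * (if q = i then (1:ℂ) else 0)) • ((2:ℂ) • star v))
      = (Matrix.of fun p q => (star (g₁ p) * g₁ q) • ((s : ℂ) • P.e + v₁))
        + (Matrix.of fun p q => (star (g₂ p) * g₂ q) • ((s : ℂ) • P.e - v₁))
        + (Matrix.of fun p q => (star (g₃ p) * g₃ q) • ((s : ℂ) • P.e - v₂))
        + (Matrix.of fun p q => (star (g₄ p) * g₄ q) • ((s : ℂ) • P.e + v₂))
        + (Matrix.of fun p q => if p = q then
            (((8 * s + 1 - (if p = i then 4 * s else 0) - (if p = j then 4 * s else 0) : ℝ)) : ℂ)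
              • P.e else 0) := by
    ext p q
    simp only [Matrix.add_apply, Matrix.smul_apply, Matrix.of_apply]
    rw [hsv, hvv]
    simp only [matE, Matrix.diagonal_apply, hg₁, hg₂, hg₃, hg₄, star_add,
      apply_ite (star : ℂ → ℂ), star_one, star_zero, star_neg, Complex.star_def,
      Complex.conj_I, _root_.map_one, _root_.map_zero, smul_ite, smul_zero]
    split_ifs <;> (try (exfalso; simp_all; done)) <;> push_cast <;>
      match_scalars <;> simp [Complex.ext_iff] <;> ring
  rw [key]
  refine P.dmax_add (P.dmax_add (P.dmax_add (P.dmax_add ?_ ?_) ?_) ?_) ?_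
  · exact P.scalar_conj _ mem1
  · exact P.scalar_conj _ mem2
  · exact P.scalar_conj _ mem3
  · exact P.scalar_conj _ mem4
  · refine P.diag_mem _ fun p => ?_
    refine P.pos_smul_mem _ ?_ _ P.e_mem_pos
    split_ifs <;> linarith

lemma AOUPack.cmax_orderUnit {n : ℕ} (X : Matrix (Fin n) (Fin n) V) (hX : Xᴴ = X) :
    ∃ t : ℝ, 0 < t ∧ (t : ℂ) • P.matE n - X ∈ P.Dmax n := by
  classical
  have hsX : ∀ a b, star (X a b) = X b a := by
    intro a b
    conv_rhs => rw [← hX]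
    rfl
  choose u hu hmem using fun z : Fin n × Fin n =>
    P.claimB ((-4⁻¹ : ℂ) • X z.1 z.2) z.1 z.2
  have husum : (0:ℝ) ≤ ∑ z, u z := Finset.sum_nonneg fun z _ => (hu z).le
  refine ⟨1 + ∑ z, u z, by linarith, ?_⟩
  have hSB : (∑ z : Fin n × Fin n, (Matrix.of fun p q =>
        ((if p = z.1 then (1:ℂ) else 0) * (if q = z.2 then (1:ℂ) else 0))
            • ((2:ℂ) • ((-4⁻¹ : ℂ) • X z.1 z.2))
        + ((if p = z.2 then (1:ℂ) else 0) * (if q = z.1 then (1:ℂ) else 0))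
            • ((2:ℂ) • star ((-4⁻¹ : ℂ) • X z.1 z.2)) : Matrix (Fin n) (Fin n) V))
      = -X := by
    ext p q
    simp only [Matrix.sum_apply, Matrix.of_apply, Matrix.neg_apply, star_smul, hsX,
      Complex.star_def, map_neg, map_inv₀, Complex.conj_ofNat]
    rw [Fintype.sum_prod_type]
    simp only [ite_mul, mul_ite, one_mul, mul_one, zero_mul, mul_zero, ite_smul, zero_smul,
      Finset.sum_add_distrib, Finset.sum_ite_irrel, Finset.sum_const_zero,
      Finset.sum_ite_eq, Finset.sum_ite_eq', Finset.mem_univ, if_true]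
    match_scalars <;> simp <;> ring
  have key : ((1 + ∑ z, u z : ℝ) : ℂ) • P.matE n - X
      = P.matE n + ∑ z : Fin n × Fin n, ((u z : ℂ) • P.matE n + Matrix.of fun p q =>
          ((if p = z.1 then (1:ℂ) else 0) * (if q = z.2 then (1:ℂ) else 0))
              • ((2:ℂ) • ((-4⁻¹ : ℂ) • X z.1 z.2))
          + ((if p = z.2 then (1:ℂ) else 0) * (if q = z.1 then (1:ℂ) else 0))
              • ((2:ℂ) • star ((-4⁻¹ : ℂ) • X z.1 z.2))) := by
    rw [Finset.sum_add_distrib, ← Finset.sum_smul, hSB]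
    have hc : ((1 + ∑ z, u z : ℝ) : ℂ) = 1 + ∑ z : Fin n × Fin n, (u z : ℂ) := by
      push_cast
      rfl
    rw [hc, add_smul, one_smul]
    abel
  rw [key]
  exact P.dmax_add (P.matE_mem n) (P.dmax_sum _ _ fun z _ => hmem z)

end OrderUnit


/-- Theorem 3.8 (first part): `(C_n^{max}(V;𝒜))_{n∈ℕ}` is an operator `𝒜`-system
structure on `V`. -/
theorem cmax_isOperatorSystemStructure
    {A V : Type*} [CStarAlgebra A]
    [AddCommGroup V] [Module ℂ V] [StarAddMonoid V] [StarModule ℂ V]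
    (P : AOUPack A V) :
    P.IsOperatorSystemStructure (fun n => P.Cmax n) := by
  constructor
  · -- herm
    intro n X hX
    have h := P.dmax_herm (hX 1 one_pos)
    rw [Matrix.conjTranspose_add, Matrix.conjTranspose_smul, P.matE_herm] at h
    rw [show star ((1:ℝ):ℂ) = ((1:ℝ):ℂ) by simp] at h
    exact add_right_cancel h
  · -- add_mem
    intro n X hX Y hY t ht
    have h := P.dmax_add (hX (t/2) (by linarith)) (hY (t/2) (by linarith))
    convert h using 1
    push_cast
    module
  · -- smul_mem
    intro n t ht X hX
    rcases eq_or_lt_of_le ht with rfl | ht'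
    · intro u hu
      simp only [Complex.ofReal_zero, zero_smul, zero_add]
      exact P.dmax_smul u hu.le (P.matE_mem n)
    · intro u hu
      have h := P.dmax_smul t ht (hX (u/t) (by positivity))
      convert h using 1
      rw [smul_add, smul_smul, ← Complex.ofReal_mul, mul_div_cancel₀ _ ht'.ne']
  · -- nonempty
    intro n
    refine ⟨0, fun t ht => ?_⟩
    simpa using P.dmax_smul t ht.le (P.matE_mem n)
  · -- salient
    intro n X hX hX'
    exact P.cmax_salient hX hX'
  · -- compat
    intro m n X M hX
    exact P.cmax_conj M hX
  · -- level_one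
    intro X
    constructor
    · intro h
      apply P.e_arch
      intro t ht
      have h2 := P.dmax_entry_pos (h t ht)
      simpa [AOUPack.matE, Matrix.diagonal_apply] using h2
    · intro hx t ht
      have heq : X + (t : ℂ) • P.matE 1
          = Matrix.of fun p q => if p = q then X 0 0 + (t : ℂ) • P.e else 0 := by
        ext p q
        have hp : p = 0 := Subsingleton.elim _ _
        have hq : q = 0 := Subsingleton.elim _ _
        subst hp; subst hq
        simp [AOUPack.matE]
      rw [heq]
      exact P.diag_mem _ fun p =>
        P.pos_add_mem _ hx _ (P.pos_smul_mem t ht.le _ P.e_mem_pos)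
  · -- orderUnit
    intro n X hX
    obtain ⟨t, ht, h⟩ := P.cmax_orderUnit X hX
    exact ⟨t, ht, P.dmax_subset_cmax h⟩
  · -- arch
    intro n X h t ht
    have h2 := h (t/2) (by linarith) (t/2) (by linarith)
    convert h2 using 1
    push_cast
    module
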